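/- Let 1 < p < ∞ and 1 ≤ q < ∞, and let T : ℓ_p → ℓ_q be a bounded linear operator. If there exists a maximizing sequence (xₙ) for T (i.e., ‖xₙ‖ = 1 for all n and ‖T xₙ‖ → ‖T‖) that does not converge weakly to 0, then T attains its norm. -/

import Mathlib

open Filter Topology
open scoped ENNReal

set_option maxHeartbeats 2000000

/-- Elementary Brezis–Lieb type estimate for `rpow`. -/
lemma rpow_diff_est {r : ℝ} (hr : 1 ≤ r) {ε : ℝ} (hε : 0 < ε) :
    ∃ C : ℝ, 0 ≤ C ∧ ∀ a b c : ℝ, 0 ≤ a → 0 ≤ b → 0 ≤ c → |c - b| ≤ a →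
      |c ^ r - b ^ r| ≤ ε * b ^ r + C * a ^ r := by
  have hr0 : 0 < r := lt_of_lt_of_le zero_lt_one hr
  have hcont : ContinuousAt (fun t : ℝ => |1 + t| ^ r) 0 := by
    have h2 : ContinuousAt (fun s : ℝ => |s| ^ r) ((fun t : ℝ => 1 + t) 0) := by
      apply ContinuousAt.rpow_const
      · exact continuous_abs.continuousAt
      · left; simp
    exact h2.comp (by fun_prop)
  rw [Metric.continuousAt_iff] at hcont
  obtain ⟨δ, hδ0, hδ⟩ := hcont ε hε
  set K : ℝ := 2 / min δ 1 with hK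
  have hmin : 0 < min δ 1 := lt_min hδ0 one_pos
  have hK0 : 0 < K := div_pos two_pos hmin
  have hK1 : 1 / K < δ := by
    rw [hK, one_div_div]
    calc min δ 1 / 2 < min δ 1 := by linarith [hmin]
    _ ≤ δ := min_le_left _ _
  have hK2 : 1 / K ≤ 1 / 2 := by
    rw [hK, one_div_div]
    calc min δ 1 / 2 ≤ 1 / 2 := by
          have := min_le_right δ 1; linarith
    _ ≤ 1 / 2 := le_refl _
  refine ⟨(K + 1) ^ r, Real.rpow_nonneg (by positivity) r, ?_⟩
  intro a b c ha hb hc habc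
  rcases eq_or_lt_of_le ha with ha0 | ha0
  · have hcb : c = b := by
      have h0 : |c - b| = 0 := le_antisymm (by rw [← ha0] at habc; exact habc) (abs_nonneg _)
      have := abs_eq_zero.1 h0
      linarith
    subst hcb
    simp only [sub_self, abs_zero]
    positivity
  by_cases hcase : b ≤ K * a
  · have hcb : c ≤ (K + 1) * a := by
      have : c - b ≤ a := (abs_le.1 habc).2
      nlinarith
    have hba : b ≤ (K + 1) * a := by nlinarith
    have h1 : c ^ r ≤ ((K+1) * a) ^ r := Real.rpow_le_rpow hc hcb hr0.le
    have h2 : b ^ r ≤ ((K+1) * a) ^ r := Real.rpow_le_rpow hb hba hr0.le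
    have hKa : ((K+1) * a) ^ r = (K+1) ^ r * a ^ r := Real.mul_rpow (by positivity) ha
    have hb' : 0 ≤ b ^ r := Real.rpow_nonneg hb r
    have hc' : 0 ≤ c ^ r := Real.rpow_nonneg hc r
    have hε' : 0 ≤ ε * b ^ r := by positivity
    rw [abs_le]
    constructor <;> nlinarith
  · push_neg at hcase
    have hb0 : 0 < b := lt_of_lt_of_le (by positivity) hcase.le
    set t : ℝ := (c - b) / b with ht
    have hct : c = b * (1 + t) := by rw [ht]; field_simp; ring
    have htK : |t| < 1 / K := by
      have h1 : |t| = |c - b| / b := by rw [ht, abs_div, abs_of_pos hb0]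
      have h2 : |c - b| / b ≤ a / b := by gcongr
      have h3 : a / b < a / (K * a) :=
        div_lt_div_of_pos_left ha0 (by positivity) hcase
      have h4 : a / (K * a) = 1 / K := by field_simp
      rw [h1]
      calc |c - b| / b ≤ a / b := h2
        _ < 1 / K := by rw [← h4]; exact h3
    have htle : |t| < δ := htK.trans hK1
    have hdist : |(|1 + t| ^ r) - 1| < ε := by
      have := hδ (by simpa [Real.dist_eq] using htle)
      simpa [Real.dist_eq, Real.one_rpow] using this
    have h1t : 0 ≤ 1 + t := by
      have : -(1:ℝ)/2 < t := by
        have := (abs_lt.1 htK).1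
        linarith [hK2, (abs_lt.1 htK).1]
      linarith
    have habs : |1 + t| = 1 + t := abs_of_nonneg h1t
    have hcr : c ^ r = b ^ r * (1 + t) ^ r := by
      rw [hct, Real.mul_rpow hb0.le h1t]
    have hbr : 0 ≤ b ^ r := Real.rpow_nonneg hb r
    have key : |c ^ r - b ^ r| ≤ ε * b ^ r := by
      rw [hcr]
      have : c ^ r - b ^ r = b ^ r * ((1 + t) ^ r - 1) := by rw [hcr]; ring
      calc |b ^ r * (1 + t) ^ r - b ^ r| = b ^ r * |(1 + t) ^ r - 1| := by
            rw [← abs_of_nonneg hbr, ← abs_mul, abs_of_nonneg hbr, mul_sub, mul_one]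
        _ ≤ b ^ r * ε := by
            apply mul_le_mul_of_nonneg_left _ hbr
            rw [habs] at hdist
            exact hdist.le
        _ = ε * b ^ r := mul_comm _ _
    calc |c ^ r - b ^ r| ≤ ε * b ^ r := key
      _ ≤ ε * b ^ r + (K + 1) ^ r * a ^ r := by
          have : 0 ≤ (K + 1) ^ r * a ^ r := by positivity
          linarith

/-- Brezis–Lieb type splitting in `ℓʳ`. -/
lemma brezis_lieb_lp {𝕜 : Type*} [RCLike 𝕜] {r : ℝ≥0∞} [Fact (1 ≤ r)] (hrt : r ≠ ⊤)
    (z : lp (fun _ : ℕ => 𝕜) r) (w : ℕ → lp (fun _ : ℕ => 𝕜) r) {C : ℝ}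
    (hC : ∀ m, ‖w m‖ ≤ C)
    (hw : ∀ i : ℕ, Tendsto (fun m => (w m : ∀ _ : ℕ, 𝕜) i) atTop (𝓝 0)) :
    Tendsto (fun m => ‖z + w m‖ ^ r.toReal - ‖w m‖ ^ r.toReal) atTop
      (𝓝 (‖z‖ ^ r.toReal)) := by
  have hr1 : 1 ≤ r.toReal := by
    have h1 : (1 : ℝ≥0∞) ≤ r := Fact.out
    rw [show (1:ℝ) = (1:ℝ≥0∞).toReal by simp]
    exact ENNReal.toReal_mono hrt h1
  set rr : ℝ := r.toReal with hrr
  have hrr0 : 0 < rr := lt_of_lt_of_le zero_lt_one hr1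
  have hCnn : 0 ≤ C := le_trans (norm_nonneg _) (hC 0)
  have Sz : Summable fun i => ‖(z : ∀ _ : ℕ, 𝕜) i‖ ^ rr := (lp.hasSum_norm hrr0 z).summable
  have Sw : ∀ m, Summable fun i => ‖(w m : ∀ _ : ℕ, 𝕜) i‖ ^ rr :=
    fun m => (lp.hasSum_norm hrr0 (w m)).summable
  set g : ℕ → ℕ → ℝ := fun m i =>
    ‖(z : ∀ _ : ℕ, 𝕜) i + (w m : ∀ _ : ℕ, 𝕜) i‖ ^ rr - ‖(w m : ∀ _ : ℕ, 𝕜) i‖ ^ rr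
      - ‖(z : ∀ _ : ℕ, 𝕜) i‖ ^ rr with hg
  have Hsum : ∀ m, HasSum (g m) (‖z + w m‖ ^ rr - ‖w m‖ ^ rr - ‖z‖ ^ rr) := by
    intro m
    have h1 : HasSum (fun i => ‖(z + w m : lp (fun _ : ℕ => 𝕜) r) i‖ ^ rr) (‖z + w m‖ ^ rr) :=
      lp.hasSum_norm hrr0 (z + w m)
    have h1' : HasSum (fun i => ‖(z : ∀ _ : ℕ, 𝕜) i + (w m : ∀ _ : ℕ, 𝕜) i‖ ^ rr)
        (‖z + w m‖ ^ rr) := by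
      convert h1 using 2 with i
      rfl
    exact (h1'.sub (lp.hasSum_norm hrr0 (w m))).sub (lp.hasSum_norm hrr0 z)
  have Sg : ∀ m, Summable (g m) := fun m => (Hsum m).summable
  have key : Tendsto (fun m => ∑' i, g m i) atTop (𝓝 0) := by
    rw [Metric.tendsto_atTop]
    intro ε hε
    set ε' : ℝ := ε / (C ^ rr + 3) with hε'
    have hCrr : 0 ≤ C ^ rr := Real.rpow_nonneg hCnn _
    have hε'0 : 0 < ε' := by positivity
    obtain ⟨C₀, hC₀nn, hest⟩ := rpow_diff_est hr1 hε'0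
    set C₁ : ℝ := C₀ + 1 with hC₁
    have hC₁0 : 0 < C₁ := by positivity
    have hptwise : ∀ m i, |g m i| ≤ ε' * ‖(w m : ∀ _ : ℕ, 𝕜) i‖ ^ rr
        + C₁ * ‖(z : ∀ _ : ℕ, 𝕜) i‖ ^ rr := by
      intro m i
      have htri : |‖(z : ∀ _ : ℕ, 𝕜) i + (w m : ∀ _ : ℕ, 𝕜) i‖ - ‖(w m : ∀ _ : ℕ, 𝕜) i‖|
          ≤ ‖(z : ∀ _ : ℕ, 𝕜) i‖ := by
        have := abs_norm_sub_norm_le ((z : ∀ _ : ℕ, 𝕜) i + (w m : ∀ _ : ℕ, 𝕜) i)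
          ((w m : ∀ _ : ℕ, 𝕜) i)
        simpa using this
      have h1 := hest _ _ _ (norm_nonneg ((z : ∀ _ : ℕ, 𝕜) i))
        (norm_nonneg ((w m : ∀ _ : ℕ, 𝕜) i))
        (norm_nonneg ((z : ∀ _ : ℕ, 𝕜) i + (w m : ∀ _ : ℕ, 𝕜) i)) htri
      have h3 : (0:ℝ) ≤ ‖(z : ∀ _ : ℕ, 𝕜) i‖ ^ rr := Real.rpow_nonneg (norm_nonneg _) _
      have h2 : |g m i| ≤ |‖(z : ∀ _ : ℕ, 𝕜) i + (w m : ∀ _ : ℕ, 𝕜) i‖ ^ rr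
          - ‖(w m : ∀ _ : ℕ, 𝕜) i‖ ^ rr| + ‖(z : ∀ _ : ℕ, 𝕜) i‖ ^ rr := by
        calc |g m i|
            ≤ |‖(z : ∀ _ : ℕ, 𝕜) i + (w m : ∀ _ : ℕ, 𝕜) i‖ ^ rr - ‖(w m : ∀ _ : ℕ, 𝕜) i‖ ^ rr|
              + |‖(z : ∀ _ : ℕ, 𝕜) i‖ ^ rr| := abs_sub _ _
          _ = _ := by rw [abs_of_nonneg h3]
      calc |g m i| ≤ (ε' * ‖(w m : ∀ _ : ℕ, 𝕜) i‖ ^ rr + C₀ * ‖(z : ∀ _ : ℕ, 𝕜) i‖ ^ rr)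
            + ‖(z : ∀ _ : ℕ, 𝕜) i‖ ^ rr := le_trans h2 (by linarith [h1])
        _ = ε' * ‖(w m : ∀ _ : ℕ, 𝕜) i‖ ^ rr + C₁ * ‖(z : ∀ _ : ℕ, 𝕜) i‖ ^ rr := by
            rw [hC₁]; ring
    have htail : Tendsto (fun N => ∑' i, ‖(z : ∀ _ : ℕ, 𝕜) (i + N)‖ ^ rr) atTop (𝓝 0) :=
      tendsto_sum_nat_add fun i => ‖(z : ∀ _ : ℕ, 𝕜) i‖ ^ rr
    obtain ⟨N, hN⟩ := (Metric.tendsto_atTop.1 htail) (ε' / C₁) (by positivity)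
    have htailz : ∑' i, ‖(z : ∀ _ : ℕ, 𝕜) (i + N)‖ ^ rr ≤ ε' / C₁ := by
      have := hN N le_rfl
      rw [Real.dist_eq, sub_zero] at this
      exact le_of_lt (lt_of_abs_lt this)
    have hhead : Tendsto (fun m => ∑ i ∈ Finset.range N, g m i) atTop (𝓝 0) := by
      have hpt : ∀ i : ℕ, Tendsto (fun m => g m i) atTop (𝓝 0) := by
        intro i
        have hwc := hw i
        have h1 : Tendsto (fun m => ‖(z : ∀ _ : ℕ, 𝕜) i + (w m : ∀ _ : ℕ, 𝕜) i‖) atTop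
            (𝓝 ‖(z : ∀ _ : ℕ, 𝕜) i‖) := by
          have := (tendsto_const_nhds (x := (z : ∀ _ : ℕ, 𝕜) i)).add hwc
          simpa using this.norm
        have hcont1 : ContinuousAt (fun s : ℝ => s ^ rr) ‖(z : ∀ _ : ℕ, 𝕜) i‖ :=
          Real.continuousAt_rpow_const _ _ (Or.inr hrr0.le)
        have h1' : Tendsto (fun m => ‖(z : ∀ _ : ℕ, 𝕜) i + (w m : ∀ _ : ℕ, 𝕜) i‖ ^ rr) atTop
            (𝓝 (‖(z : ∀ _ : ℕ, 𝕜) i‖ ^ rr)) := (hcont1.tendsto).comp h1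
        have hcont2 : ContinuousAt (fun s : ℝ => s ^ rr) 0 :=
          Real.continuousAt_rpow_const _ _ (Or.inr hrr0.le)
        have h2 : Tendsto (fun m => ‖(w m : ∀ _ : ℕ, 𝕜) i‖ ^ rr) atTop (𝓝 0) := by
          have hwn : Tendsto (fun m => ‖(w m : ∀ _ : ℕ, 𝕜) i‖) atTop (𝓝 0) := by
            simpa using hwc.norm
          have h2' := (hcont2.tendsto).comp hwn
          simpa [Function.comp_def, Real.zero_rpow hrr0.ne'] using h2'
        have := (h1'.sub h2).sub (tendsto_const_nhds (x := ‖(z : ∀ _ : ℕ, 𝕜) i‖ ^ rr))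
        simpa using this
      have := tendsto_finset_sum (Finset.range N) (fun i _ => hpt i)
      simpa using this
    obtain ⟨M₀, hM₀⟩ := (Metric.tendsto_atTop.1 hhead) ε' hε'0
    refine ⟨M₀, fun m hm => ?_⟩
    have hheadm : |∑ i ∈ Finset.range N, g m i| < ε' := by
      have := hM₀ m hm
      rwa [Real.dist_eq, sub_zero] at this
    -- tail estimate
    have Sgs : Summable fun i => g m (i + N) := (summable_nat_add_iff N).2 (Sg m)
    have Smaj : Summable fun i => ε' * ‖(w m : ∀ _ : ℕ, 𝕜) (i + N)‖ ^ rr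
        + C₁ * ‖(z : ∀ _ : ℕ, 𝕜) (i + N)‖ ^ rr :=
      (((summable_nat_add_iff N).2 (Sw m)).mul_left ε').add
        (((summable_nat_add_iff N).2 Sz).mul_left C₁)
    have Sabs : Summable fun i => |g m (i + N)| := by
      apply Summable.of_nonneg_of_le (fun i => abs_nonneg _) (fun i => hptwise m (i + N)) Smaj
    have hwtail : ∑' i, ‖(w m : ∀ _ : ℕ, 𝕜) (i + N)‖ ^ rr ≤ C ^ rr := by
      have h1 := Summable.sum_add_tsum_nat_add (f := fun i => ‖(w m : ∀ _ : ℕ, 𝕜) i‖ ^ rr) N (Sw m)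
      have h2 : ∑' i, ‖(w m : ∀ _ : ℕ, 𝕜) i‖ ^ rr = ‖w m‖ ^ rr :=
        (lp.norm_rpow_eq_tsum hrr0 (w m)).symm
      have h3 : (0:ℝ) ≤ ∑ i ∈ Finset.range N, ‖(w m : ∀ _ : ℕ, 𝕜) i‖ ^ rr :=
        Finset.sum_nonneg fun i _ => Real.rpow_nonneg (norm_nonneg _) _
      have h4 : ‖w m‖ ^ rr ≤ C ^ rr := Real.rpow_le_rpow (norm_nonneg _) (hC m) hrr0.le
      rw [h2] at h1
      linarith
    have hgtail : |∑' i, g m (i + N)| ≤ ε' * C ^ rr + ε' := by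
      have h1 : |∑' i, g m (i + N)| ≤ ∑' i, |g m (i + N)| := by
        have h1' := norm_tsum_le_tsum_norm (f := fun i => g m (i + N))
          (by simpa [Real.norm_eq_abs] using Sabs)
        simpa [Real.norm_eq_abs] using h1'
      have h2 : ∑' i, |g m (i + N)| ≤ ∑' i, (ε' * ‖(w m : ∀ _ : ℕ, 𝕜) (i + N)‖ ^ rr
          + C₁ * ‖(z : ∀ _ : ℕ, 𝕜) (i + N)‖ ^ rr) :=
        Summable.tsum_le_tsum (fun i => hptwise m (i + N)) Sabs Smaj
      have h3 : ∑' i, (ε' * ‖(w m : ∀ _ : ℕ, 𝕜) (i + N)‖ ^ rr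
          + C₁ * ‖(z : ∀ _ : ℕ, 𝕜) (i + N)‖ ^ rr)
          = ε' * (∑' i, ‖(w m : ∀ _ : ℕ, 𝕜) (i + N)‖ ^ rr)
            + C₁ * (∑' i, ‖(z : ∀ _ : ℕ, 𝕜) (i + N)‖ ^ rr) := by
        rw [Summable.tsum_add (((summable_nat_add_iff N).2 (Sw m)).mul_left ε')
          (((summable_nat_add_iff N).2 Sz).mul_left C₁), tsum_mul_left, tsum_mul_left]
      have h4 : ε' * (∑' i, ‖(w m : ∀ _ : ℕ, 𝕜) (i + N)‖ ^ rr) ≤ ε' * C ^ rr :=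
        mul_le_mul_of_nonneg_left hwtail hε'0.le
      have h5 : C₁ * (∑' i, ‖(z : ∀ _ : ℕ, 𝕜) (i + N)‖ ^ rr) ≤ C₁ * (ε' / C₁) :=
        mul_le_mul_of_nonneg_left htailz hC₁0.le
      have h6 : C₁ * (ε' / C₁) = ε' := by field_simp
      rw [h3] at h2
      refine le_trans h1 (le_trans h2 ?_)
      exact add_le_add h4 (le_trans h5 (le_of_eq h6))
    have hsplit : ∑ i ∈ Finset.range N, g m i + ∑' i, g m (i + N) = ∑' i, g m i :=
      Summable.sum_add_tsum_nat_add N (Sg m)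
    rw [Real.dist_eq, sub_zero, ← hsplit]
    calc |∑ i ∈ Finset.range N, g m i + ∑' i, g m (i + N)|
        ≤ |∑ i ∈ Finset.range N, g m i| + |∑' i, g m (i + N)| := abs_add_le _ _
      _ < ε' + (ε' * C ^ rr + ε') := by linarith
      _ ≤ ε' * (C ^ rr + 3) := by nlinarith [hε'0.le]
      _ = ε := by rw [hε']; field_simp
  have := key.add (tendsto_const_nhds (x := ‖z‖ ^ rr))
  rw [zero_add] at this
  refine this.congr fun m => ?_
  rw [(Hsum m).tsum_eq]
  ring

section weaknull
variable {𝕜 : Type*} [RCLike 𝕜] {p : ℝ≥0∞} [Fact (1 ≤ p)]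

/-- Bounded, coordinatewise null sequences in `ℓᵖ`, `1 < p < ∞`, are weakly null. -/
lemma lp_weak_null (hp : 1 < p) (hp' : p ≠ ⊤)
    (g : lp (fun _ : ℕ => 𝕜) p →L[𝕜] 𝕜) (d : ℕ → lp (fun _ : ℕ => 𝕜) p) {C : ℝ}
    (hC : ∀ m, ‖d m‖ ≤ C)
    (hd : ∀ i : ℕ, Tendsto (fun m => (d m : ∀ _ : ℕ, 𝕜) i) atTop (𝓝 0)) :
    Tendsto (fun m => g (d m)) atTop (𝓝 0) := by
  have hpr : 1 < p.toReal := by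
    rw [show (1:ℝ) = (1:ℝ≥0∞).toReal by simp]
    exact (ENNReal.toReal_lt_toReal (by simp) hp').2 hp
  set pr : ℝ := p.toReal with hprdef
  have hpr0 : 0 < pr := lt_trans zero_lt_one hpr
  have hconj : pr.HolderConjugate (pr.conjExponent) := Real.HolderConjugate.conjExponent hpr
  set cr : ℝ := pr.conjExponent with hcrdef
  have hcr1 : 1 < cr := hconj.symm.lt
  have hcr0 : 0 < cr := lt_trans zero_lt_one hcr1
  have hCnn : 0 ≤ C := le_trans (norm_nonneg _) (hC 0)
  set y : ℕ → 𝕜 := fun i => g (lp.single p i 1) with hy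
  -- `g` applied to a single
  have hsingle : ∀ (c : 𝕜) (i : ℕ), g (lp.single p i c) = c * y i := by
    intro c i
    have h1 : lp.single p i c = c • (lp.single p i (1 : 𝕜) : lp (fun _ : ℕ => 𝕜) p) := by
      rw [← lp.single_smul]
      norm_num
    rw [h1, map_smul, smul_eq_mul]
  -- representation of g
  have hrep : ∀ v : lp (fun _ : ℕ => 𝕜) p,
      HasSum (fun i => (v : ∀ _ : ℕ, 𝕜) i * y i) (g v) := by
    intro v
    have h1 := (lp.hasSum_single hp' v).mapL g
    refine h1.congr_fun fun i => ?_
    rw [hsingle]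
  -- the coefficients are `ℓᶜʳ` with tsums of powers bounded by ‖g‖^cr
  have hYfin : ∀ s : Finset ℕ, ∑ i ∈ s, ‖y i‖ ^ cr ≤ ‖g‖ ^ cr := by
    intro s
    set S : ℝ := ∑ i ∈ s, ‖y i‖ ^ cr with hS
    have hSnn : 0 ≤ S := Finset.sum_nonneg fun i _ => Real.rpow_nonneg (norm_nonneg _) _
    set c : ℕ → 𝕜 := fun i => ((‖y i‖ ^ (cr - 2) : ℝ) : 𝕜) * (starRingEnd 𝕜) (y i) with hc
    have hnormc : ∀ i, ‖c i‖ = ‖y i‖ ^ (cr - 1) := by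
      intro i
      by_cases h0 : y i = 0
      · simp [hc, h0, Real.zero_rpow (by linarith : cr - 1 ≠ 0)]
      · have hy0 : (0:ℝ) < ‖y i‖ := norm_pos_iff.2 h0
        rw [hc]
        simp only [norm_mul, RCLike.norm_ofReal, RCLike.norm_conj]
        rw [abs_of_nonneg (Real.rpow_nonneg (norm_nonneg _) _)]
        rw [show cr - 1 = cr - 2 + 1 by ring, Real.rpow_add_one hy0.ne']
    have hcy : ∀ i, c i * y i = ((‖y i‖ ^ cr : ℝ) : 𝕜) := by
      intro i
      by_cases h0 : y i = 0
      · simp [hc, h0, Real.zero_rpow hcr0.ne']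
      · have hy0 : (0:ℝ) < ‖y i‖ := norm_pos_iff.2 h0
        rw [hc, mul_assoc, RCLike.conj_mul]
        rw [← RCLike.ofReal_pow, ← RCLike.ofReal_mul]
        congr 1
        rw [← Real.rpow_natCast ‖y i‖ 2, ← Real.rpow_add hy0]
        norm_num
    set w : lp (fun _ : ℕ => 𝕜) p := ∑ i ∈ s, lp.single p i (c i) with hw
    have hgw : g w = ((S : ℝ) : 𝕜) := by
      rw [hw, map_sum]
      rw [hS, RCLike.ofReal_sum]
      refine Finset.sum_congr rfl fun i _ => ?_
      rw [hsingle, hcy]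
    have hnormw : ‖w‖ ^ pr = S := by
      rw [hw, lp.norm_sum_single hpr0, hS]
      refine Finset.sum_congr rfl fun i _ => ?_
      rw [hnormc, ← Real.rpow_mul (norm_nonneg _)]
      congr 1
      have h1 : cr - 1 = cr / pr := by
        field_simp
        linarith [hconj.sub_one_mul_conj]
      rw [h1]
      field_simp
      exact hprdef.symm
    rcases eq_or_lt_of_le hSnn with h0 | hSpos
    · rw [← h0]; positivity
    have hwnorm : ‖w‖ = S ^ pr⁻¹ := by
      rw [← hnormw, Real.rpow_rpow_inv (norm_nonneg _) hpr0.ne']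
    have hbound : S ≤ ‖g‖ * S ^ pr⁻¹ := by
      calc S = ‖g w‖ := by rw [hgw, RCLike.norm_ofReal, abs_of_nonneg hSnn]
        _ ≤ ‖g‖ * ‖w‖ := g.le_opNorm w
        _ = ‖g‖ * S ^ pr⁻¹ := by rw [hwnorm]
    have hS1 : S ^ (1 - pr⁻¹) ≤ ‖g‖ := by
      have h2 : S ^ (1 - pr⁻¹) = S / S ^ pr⁻¹ := by
        rw [Real.rpow_sub hSpos, Real.rpow_one]
      rw [h2, div_le_iff₀ (Real.rpow_pos_of_pos hSpos _)]
      exact hbound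
    have h3 : (1 - pr⁻¹) = cr⁻¹ := by
      have h4 := hconj.inv_add_inv_eq_one
      linarith
    calc S = (S ^ (1 - pr⁻¹)) ^ cr := by
          rw [h3, Real.rpow_inv_rpow hSnn hcr0.ne']
      _ ≤ ‖g‖ ^ cr := Real.rpow_le_rpow (Real.rpow_nonneg hSnn _) hS1 hcr0.le
  have hynn : ∀ i, (0:ℝ) ≤ ‖y i‖ ^ cr := fun i => Real.rpow_nonneg (norm_nonneg _) _
  have Sy : Summable fun i => ‖y i‖ ^ cr :=
    summable_of_sum_range_le hynn fun n => hYfin (Finset.range n)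
  -- main estimate
  rw [Metric.tendsto_atTop]
  intro ε hε
  have htail : Tendsto (fun N => ∑' i, ‖y (i + N)‖ ^ cr) atTop (𝓝 0) :=
    tendsto_sum_nat_add fun i => ‖y i‖ ^ cr
  set δ : ℝ := (ε / (2 * (C + 1))) ^ cr with hδ
  have hδ0 : 0 < δ := Real.rpow_pos_of_pos (by positivity) _
  obtain ⟨N, hN⟩ := (Metric.tendsto_atTop.1 htail) δ hδ0
  have htailN : ∑' i, ‖y (i + N)‖ ^ cr ≤ δ := by
    have := hN N le_rfl
    rw [Real.dist_eq, sub_zero] at this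
    exact le_of_lt (lt_of_abs_lt this)
  have htailN' : (∑' i, ‖y (i + N)‖ ^ cr) ^ cr⁻¹ ≤ ε / (2 * (C + 1)) := by
    calc (∑' i, ‖y (i + N)‖ ^ cr) ^ cr⁻¹ ≤ δ ^ cr⁻¹ :=
          Real.rpow_le_rpow (tsum_nonneg fun i => hynn _) htailN (by positivity)
      _ = ε / (2 * (C + 1)) := by
          rw [hδ, Real.rpow_rpow_inv (by positivity) hcr0.ne']
  -- head tends to 0
  have hhead : Tendsto (fun m => ∑ i ∈ Finset.range N, (d m : ∀ _ : ℕ, 𝕜) i * y i) atTop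
      (𝓝 0) := by
    have h1 : ∀ i : ℕ, Tendsto (fun m => (d m : ∀ _ : ℕ, 𝕜) i * y i) atTop (𝓝 0) := by
      intro i
      simpa using (hd i).mul_const (y i)
    have := tendsto_finset_sum (Finset.range N) (fun i _ => h1 i)
    simpa using this
  obtain ⟨M₀, hM₀⟩ := (Metric.tendsto_atTop.1 hhead) (ε / 2) (by positivity)
  refine ⟨M₀, fun m hm => ?_⟩
  -- summability facts for d m
  have Sd : Summable fun i => ‖(d m : ∀ _ : ℕ, 𝕜) i‖ ^ pr := (lp.hasSum_norm hpr0 (d m)).summable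
  have Sdsh : Summable fun i => ‖(d m : ∀ _ : ℕ, 𝕜) (i + N)‖ ^ pr := (summable_nat_add_iff N).2 Sd
  have Sysh : Summable fun i => ‖y (i + N)‖ ^ cr := (summable_nat_add_iff N).2 Sy
  obtain ⟨Sprod, hHolder⟩ := Real.summable_and_inner_le_Lp_mul_Lq_tsum_of_nonneg hconj
    (fun i => norm_nonneg ((d m : ∀ _ : ℕ, 𝕜) (i + N))) (fun i => norm_nonneg (y (i + N)))
    Sdsh Sysh
  -- the series for g (d m)
  have hgd := hrep (d m)
  have Sgd : Summable fun i => (d m : ∀ _ : ℕ, 𝕜) i * y i := hgd.summable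
  have hsplit : ∑ i ∈ Finset.range N, (d m : ∀ _ : ℕ, 𝕜) i * y i
      + ∑' i, (d m : ∀ _ : ℕ, 𝕜) (i + N) * y (i + N) = g (d m) := by
    rw [← hgd.tsum_eq]
    exact Summable.sum_add_tsum_nat_add N Sgd
  -- tail estimate
  have htailbound : ‖∑' i, (d m : ∀ _ : ℕ, 𝕜) (i + N) * y (i + N)‖ ≤ ε / 2 := by
    have h1 : ‖∑' i, (d m : ∀ _ : ℕ, 𝕜) (i + N) * y (i + N)‖
        ≤ ∑' i, ‖(d m : ∀ _ : ℕ, 𝕜) (i + N)‖ * ‖y (i + N)‖ := by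
      have h2 := norm_tsum_le_tsum_norm (f := fun i => (d m : ∀ _ : ℕ, 𝕜) (i + N) * y (i + N))
        (by simpa [norm_mul] using Sprod)
      simpa [norm_mul] using h2
    have h3 : (∑' i, ‖(d m : ∀ _ : ℕ, 𝕜) (i + N)‖ ^ pr) ^ (1/pr) ≤ C := by
      have h4 : ∑' i, ‖(d m : ∀ _ : ℕ, 𝕜) (i + N)‖ ^ pr ≤ ‖d m‖ ^ pr := by
        have h5 := Summable.sum_add_tsum_nat_add (f := fun i => ‖(d m : ∀ _ : ℕ, 𝕜) i‖ ^ pr) N Sd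
        have h6 : ∑' i, ‖(d m : ∀ _ : ℕ, 𝕜) i‖ ^ pr = ‖d m‖ ^ pr :=
          (lp.norm_rpow_eq_tsum hpr0 (d m)).symm
        have h7 : (0:ℝ) ≤ ∑ i ∈ Finset.range N, ‖(d m : ∀ _ : ℕ, 𝕜) i‖ ^ pr :=
          Finset.sum_nonneg fun i _ => Real.rpow_nonneg (norm_nonneg _) _
        rw [h6] at h5
        linarith
      calc (∑' i, ‖(d m : ∀ _ : ℕ, 𝕜) (i + N)‖ ^ pr) ^ (1/pr)
          ≤ (‖d m‖ ^ pr) ^ (1/pr) :=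
            Real.rpow_le_rpow (tsum_nonneg fun i => Real.rpow_nonneg (norm_nonneg _) _)
              h4 (by positivity)
        _ = ‖d m‖ := by
            rw [one_div, Real.rpow_rpow_inv (norm_nonneg _) hpr0.ne']
        _ ≤ C := hC m
    calc ‖∑' i, (d m : ∀ _ : ℕ, 𝕜) (i + N) * y (i + N)‖
        ≤ ∑' i, ‖(d m : ∀ _ : ℕ, 𝕜) (i + N)‖ * ‖y (i + N)‖ := h1
      _ ≤ (∑' i, ‖(d m : ∀ _ : ℕ, 𝕜) (i + N)‖ ^ pr) ^ (1/pr)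
          * (∑' i, ‖y (i + N)‖ ^ cr) ^ (1/cr) := hHolder
      _ ≤ C * (ε / (2 * (C + 1))) := by
          apply mul_le_mul h3 (by rw [one_div]; exact htailN')
            (Real.rpow_nonneg (tsum_nonneg fun i => hynn _) _) hCnn
      _ ≤ ε / 2 := by
          have heq : C * (ε / (2 * (C + 1))) = (C * ε) / (2 * (C + 1)) := by ring
          rw [heq, div_le_div_iff₀ (by positivity : (0:ℝ) < 2 * (C + 1))
            (by norm_num : (0:ℝ) < 2)]
          nlinarith [hε.le, hCnn]
  have hheadm : ‖∑ i ∈ Finset.range N, (d m : ∀ _ : ℕ, 𝕜) i * y i‖ < ε / 2 := by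
    have := hM₀ m hm
    rwa [dist_eq_norm, sub_zero] at this
  rw [dist_eq_norm, sub_zero, ← hsplit]
  calc ‖∑ i ∈ Finset.range N, (d m : ∀ _ : ℕ, 𝕜) i * y i
      + ∑' i, (d m : ∀ _ : ℕ, 𝕜) (i + N) * y (i + N)‖
      ≤ ‖∑ i ∈ Finset.range N, (d m : ∀ _ : ℕ, 𝕜) i * y i‖
        + ‖∑' i, (d m : ∀ _ : ℕ, 𝕜) (i + N) * y (i + N)‖ := norm_add_le _ _
    _ < ε / 2 + ε / 2 := by
        have := add_le_add (le_refl (0:ℝ)) htailbound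
        linarith
    _ = ε := by ring
end weaknull

/-- If `1 < p < ∞`, `1 ≤ q < ∞` and `T : ℓ_p → ℓ_q` is a bounded linear
operator admitting a maximizing sequence that does not converge weakly to `0`, then
`T` attains its norm. -/
theorem weak_maximizing_lp_lq {𝕜 : Type*} [RCLike 𝕜] (p q : ℝ≥0∞)
    [Fact (1 ≤ p)] [Fact (1 ≤ q)] (hp : 1 < p) (hp' : p ≠ ⊤) (hq' : q ≠ ⊤)
    (T : lp (fun _ : ℕ => 𝕜) p →L[𝕜] lp (fun _ : ℕ => 𝕜) q)
    (x : ℕ → lp (fun _ : ℕ => 𝕜) p)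
    (hx1 : ∀ n, ‖x n‖ = 1)
    (hmax : Tendsto (fun n => ‖T (x n)‖) atTop (𝓝 ‖T‖))
    (hnw : ¬ ∀ f : lp (fun _ : ℕ => 𝕜) p →L[𝕜] 𝕜,
      Tendsto (fun n => f (x n)) atTop (𝓝 0)) :
    ∃ x₀, ‖x₀‖ = 1 ∧ ‖T x₀‖ = ‖T‖ := by
  classical
  -- trivial case `T = 0`
  by_cases hM0 : ‖T‖ = 0
  · refine ⟨x 0, hx1 0, ?_⟩
    have h1 := T.le_opNorm (x 0)
    rw [hM0, zero_mul] at h1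
    rw [hM0]
    exact le_antisymm h1 (norm_nonneg _)
  have hM : 0 < ‖T‖ := lt_of_le_of_ne (norm_nonneg _) (Ne.symm hM0)
  -- real exponents
  have hpr1 : 1 < p.toReal := by
    rw [show (1:ℝ) = (1:ℝ≥0∞).toReal by simp]
    exact (ENNReal.toReal_lt_toReal (by simp) hp').2 hp
  set pr : ℝ := p.toReal with hprdef
  have hpr0 : 0 < pr := lt_trans zero_lt_one hpr1
  have hqr1 : 1 ≤ q.toReal := by
    rw [show (1:ℝ) = (1:ℝ≥0∞).toReal by simp]
    exact ENNReal.toReal_mono hq' Fact.out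
  set qr : ℝ := q.toReal with hqrdef
  have hqr0 : 0 < qr := lt_of_lt_of_le zero_lt_one hqr1
  have hp0 : p ≠ 0 := (lt_trans zero_lt_one hp).ne'
  -- extract the functional and a subsequence witnessing non-weak-nullity
  obtain ⟨f, hnf⟩ := not_forall.1 hnw
  rw [Metric.tendsto_atTop] at hnf
  push_neg at hnf
  obtain ⟨ε₀, hε₀, hfreq0⟩ := hnf
  have hfreq : ∃ᶠ n in atTop, ε₀ ≤ dist (f (x n)) 0 := by
    rw [Filter.frequently_atTop]
    intro N
    obtain ⟨n, hn1, hn2⟩ := hfreq0 N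
    exact ⟨n, hn1, hn2⟩
  obtain ⟨ψ, hψmono, hψ⟩ := Filter.extraction_of_frequently_atTop hfreq
  -- coordinatewise convergent subsequence via compactness
  set K : Set (ℕ → 𝕜) := Set.univ.pi (fun _ : ℕ => Metric.closedBall (0:𝕜) 1) with hKdef
  have hK : IsCompact K := isCompact_univ_pi fun i => isCompact_closedBall 0 1
  have humem : ∀ n, ((x (ψ n) : ∀ _ : ℕ, 𝕜)) ∈ K := by
    intro n
    rw [hKdef, Set.mem_univ_pi]
    intro i
    rw [Metric.mem_closedBall, dist_zero_right]
    calc ‖(x (ψ n) : ∀ _ : ℕ, 𝕜) i‖ ≤ ‖x (ψ n)‖ := lp.norm_apply_le_norm hp0 _ i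
      _ = 1 := hx1 _
  obtain ⟨v0, _, φ₀, hφ₀, hconv⟩ := hK.tendsto_subseq humem
  set X : ℕ → lp (fun _ : ℕ => 𝕜) p := fun n => x (ψ (φ₀ n)) with hXdef
  have hX1 : ∀ n, ‖X n‖ = 1 := fun n => hx1 _
  have hXcoord : ∀ i : ℕ, Tendsto (fun n => (X n : ∀ _ : ℕ, 𝕜) i) atTop (𝓝 (v0 i)) :=
    fun i => (tendsto_pi_nhds.1 hconv) i
  have hfX0 : ∀ n, ε₀ ≤ ‖f (X n)‖ := by
    intro n
    have := hψ (φ₀ n)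
    rwa [dist_zero_right] at this
  -- the coordinatewise limit is in ℓᵖ
  have hv0mem : Memℓp v0 p := by
    apply memℓp_gen' (C := 1)
    intro s
    have hlim : Tendsto (fun n => ∑ i ∈ s, ‖(X n : ∀ _ : ℕ, 𝕜) i‖ ^ pr) atTop
        (𝓝 (∑ i ∈ s, ‖v0 i‖ ^ pr)) := by
      apply tendsto_finset_sum
      intro i _
      have h1 : Tendsto (fun n => ‖(X n : ∀ _ : ℕ, 𝕜) i‖) atTop (𝓝 ‖v0 i‖) :=
        (hXcoord i).norm
      exact ((Real.continuousAt_rpow_const _ _ (Or.inr hpr0.le)).tendsto).comp h1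
    refine le_of_tendsto hlim (Eventually.of_forall fun n => ?_)
    calc ∑ i ∈ s, ‖(X n : ∀ _ : ℕ, 𝕜) i‖ ^ pr
        ≤ ∑' i, ‖(X n : ∀ _ : ℕ, 𝕜) i‖ ^ pr :=
          Summable.sum_le_tsum s (fun i _ => Real.rpow_nonneg (norm_nonneg _) _)
            (lp.hasSum_norm hpr0 (X n)).summable
      _ = ‖X n‖ ^ pr := (lp.norm_rpow_eq_tsum hpr0 (X n)).symm
      _ = 1 := by rw [hX1 n, Real.one_rpow]
  set v : lp (fun _ : ℕ => 𝕜) p := ⟨v0, hv0mem⟩ with hvdef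
  -- the difference sequence
  set w : ℕ → lp (fun _ : ℕ => 𝕜) p := fun n => X n - v with hwdef
  have hwcoord : ∀ i : ℕ, Tendsto (fun n => (w n : ∀ _ : ℕ, 𝕜) i) atTop (𝓝 0) := by
    intro i
    have h1 : ∀ n, (w n : ∀ _ : ℕ, 𝕜) i = (X n : ∀ _ : ℕ, 𝕜) i - v0 i := by
      intro n
      rw [hwdef]
      simp only [lp.coeFn_sub, Pi.sub_apply]
      rfl
    have h2 := (hXcoord i).sub (tendsto_const_nhds (x := v0 i))
    rw [sub_self] at h2
    exact h2.congr fun n => (h1 n).symm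
  have hwb : ∀ n, ‖w n‖ ≤ 1 + ‖v‖ := by
    intro n
    rw [hwdef]
    calc ‖X n - v‖ ≤ ‖X n‖ + ‖v‖ := norm_sub_le _ _
      _ = 1 + ‖v‖ := by rw [hX1 n]
  -- `f (X n) → f v`, hence `v ≠ 0`
  have hfweak := lp_weak_null hp hp' f w hwb hwcoord
  have hfX : Tendsto (fun n => f (X n)) atTop (𝓝 (f v)) := by
    have h1 := hfweak.add (tendsto_const_nhds (x := f v))
    rw [zero_add] at h1
    refine h1.congr fun n => ?_
    rw [hwdef]
    simp [map_sub]
  have hfvnorm : ε₀ ≤ ‖f v‖ :=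
    ge_of_tendsto hfX.norm (Eventually.of_forall hfX0)
  have ha0 : 0 < ‖v‖ := by
    rw [norm_pos_iff]
    intro hv0
    rw [hv0, map_zero, norm_zero] at hfvnorm
    linarith
  -- coordinate functionals on ℓ^q
  have hq0 : q ≠ 0 := (lt_of_lt_of_le zero_lt_one Fact.out).ne'
  set coord : ℕ → (lp (fun _ : ℕ => 𝕜) q →L[𝕜] 𝕜) := fun i =>
    LinearMap.mkContinuous
      { toFun := fun z => (z : ∀ _ : ℕ, 𝕜) i
        map_add' := fun a b => by simp only [lp.coeFn_add, Pi.add_apply]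
        map_smul' := fun c a => by simp only [lp.coeFn_smul, Pi.smul_apply, RingHom.id_apply] }
      1 (fun z => by rw [one_mul]; exact lp.norm_apply_le_norm hq0 z i) with hcoorddef
  have hTwcoord : ∀ i : ℕ, Tendsto
      (fun n => ((T (X n) - T v : lp (fun _ : ℕ => 𝕜) q) : ∀ _ : ℕ, 𝕜) i) atTop (𝓝 0) := by
    intro i
    have h1 := lp_weak_null hp hp' ((coord i).comp T) w hwb hwcoord
    refine h1.congr fun n => ?_
    rw [ContinuousLinearMap.comp_apply, hwdef]
    rw [map_sub]
    rfl
  have hsb : ∀ n, ‖T (X n) - T v‖ ≤ ‖T‖ * (1 + ‖v‖) := by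
    intro n
    rw [← map_sub]
    calc ‖T (X n - v)‖ ≤ ‖T‖ * ‖X n - v‖ := T.le_opNorm _
      _ ≤ ‖T‖ * (1 + ‖v‖) := by
          apply mul_le_mul_of_nonneg_left _ (norm_nonneg T)
          exact hwb n
  have hTXn : Tendsto (fun n => ‖T (X n)‖) atTop (𝓝 ‖T‖) :=
    hmax.comp ((hψmono.comp hφ₀).tendsto_atTop)
  -- splitting in the domain
  have happ1 := brezis_lieb_lp hp' v w hwb hwcoord
  have htp : Tendsto (fun n => ‖w n‖ ^ pr) atTop (𝓝 (1 - ‖v‖ ^ pr)) := by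
    have h1 := (tendsto_const_nhds (x := (1:ℝ))).sub happ1
    refine h1.congr fun n => ?_
    have h2 : v + w n = X n := by
      show v + (X n - v) = X n
      rw [add_comm]
      exact sub_add_cancel (X n) v
    rw [h2, hX1 n, Real.one_rpow]
    ring
  set τp : ℝ := 1 - ‖v‖ ^ pr with hτpdef
  have hτp0 : 0 ≤ τp :=
    ge_of_tendsto htp (Eventually.of_forall fun n => Real.rpow_nonneg (norm_nonneg _) _)
  have hvle1 : ‖v‖ ≤ 1 := by
    have h1 : ‖v‖ ^ pr ≤ 1 := by rw [hτpdef] at hτp0; linarith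
    calc ‖v‖ = (‖v‖ ^ pr) ^ pr⁻¹ := (Real.rpow_rpow_inv (norm_nonneg v) hpr0.ne').symm
      _ ≤ 1 ^ pr⁻¹ := Real.rpow_le_rpow (Real.rpow_nonneg (norm_nonneg _) _) h1 (by positivity)
      _ = 1 := Real.one_rpow _
  -- splitting in the codomain
  have happ2 := brezis_lieb_lp hq' (T v) (fun n => T (X n) - T v) hsb hTwcoord
  have happ2' : Tendsto (fun n => ‖T (X n)‖ ^ qr - ‖T (X n) - T v‖ ^ qr) atTop
      (𝓝 (‖T v‖ ^ qr)) := by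
    refine happ2.congr fun n => ?_
    have h2 : T v + (T (X n) - T v) = T (X n) := by abel
    rw [h2]
  have hTXq : Tendsto (fun n => ‖T (X n)‖ ^ qr) atTop (𝓝 (‖T‖ ^ qr)) :=
    ((Real.continuousAt_rpow_const _ _ (Or.inr hqr0.le)).tendsto).comp hTXn
  have hsq : Tendsto (fun n => ‖T (X n) - T v‖ ^ qr) atTop
      (𝓝 (‖T‖ ^ qr - ‖T v‖ ^ qr)) := by
    have h1 := hTXq.sub happ2'
    refine h1.congr fun n => ?_
    ring
  set A : ℝ := ‖T v‖ ^ qr with hAdef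
  set B : ℝ := ‖T‖ ^ qr - A with hBdef
  have hAleq : A ≤ ‖T‖ ^ qr * ‖v‖ ^ qr := by
    rw [hAdef, ← Real.mul_rpow (norm_nonneg T) (norm_nonneg v)]
    exact Real.rpow_le_rpow (norm_nonneg _) (T.le_opNorm v) hqr0.le
  have hvq1 : ‖v‖ ^ qr ≤ 1 := Real.rpow_le_one (norm_nonneg _) hvle1 hqr0.le
  have hB0 : 0 ≤ B := by
    rw [hBdef]
    have h1 : ‖T‖ ^ qr * ‖v‖ ^ qr ≤ ‖T‖ ^ qr * 1 :=
      mul_le_mul_of_nonneg_left hvq1 (Real.rpow_nonneg (norm_nonneg _) _)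
    rw [mul_one] at h1
    linarith
  have hpow : ∀ t : ℝ, 0 ≤ t → t ^ qr = (t ^ pr) ^ (qr / pr) := by
    intro t ht
    rw [← Real.rpow_mul ht]
    congr 1
    field_simp
  by_cases hple : pr ≤ qr
  · -- case `p ≤ q`
    have hρ1 : 1 ≤ qr / pr := (one_le_div hpr0).2 hple
    have htq : Tendsto (fun n => ‖w n‖ ^ qr) atTop (𝓝 (τp ^ (qr/pr))) := by
      have hc := (Real.continuousAt_rpow_const τp (qr/pr) (Or.inr (by positivity))).tendsto
      have h1 := hc.comp htp
      refine h1.congr fun n => ?_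
      exact (hpow _ (norm_nonneg _)).symm
    have hBle : B ≤ ‖T‖ ^ qr * τp ^ (qr/pr) := by
      refine le_of_tendsto_of_tendsto' hsq (htq.const_mul (‖T‖ ^ qr)) fun n => ?_
      have h1 : ‖T (X n) - T v‖ ≤ ‖T‖ * ‖w n‖ := by
        rw [← map_sub]
        exact T.le_opNorm (X n - v)
      calc ‖T (X n) - T v‖ ^ qr ≤ (‖T‖ * ‖w n‖) ^ qr :=
            Real.rpow_le_rpow (norm_nonneg _) h1 hqr0.le
        _ = ‖T‖ ^ qr * ‖w n‖ ^ qr := Real.mul_rpow (norm_nonneg _) (norm_nonneg _)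
    have hkey : τp ^ (qr/pr) ≤ 1 - ‖v‖ ^ qr := by
      have hαpos : 0 < ‖v‖ ^ pr := Real.rpow_pos_of_pos ha0 _
      have h2 : ‖v‖ ^ qr ≤ ‖v‖ ^ pr := Real.rpow_le_rpow_of_exponent_ge ha0 hvle1 hple
      have h1 : τp ^ (qr/pr) ≤ τp := by
        rcases eq_or_lt_of_le hτp0 with h0 | hτpos
        · rw [← h0, Real.zero_rpow (by positivity : qr/pr ≠ 0)]
        · have hτle1 : τp ≤ 1 := by rw [hτpdef]; linarith
          calc τp ^ (qr/pr) ≤ τp ^ (1:ℝ) :=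
                Real.rpow_le_rpow_of_exponent_ge hτpos hτle1 hρ1
            _ = τp := Real.rpow_one _
      rw [hτpdef] at h1 ⊢
      linarith
    have hmul : ‖T‖ ^ qr * τp ^ (qr/pr) ≤ ‖T‖ ^ qr * (1 - ‖v‖ ^ qr) :=
      mul_le_mul_of_nonneg_left hkey (Real.rpow_nonneg (norm_nonneg _) _)
    have hAeq : A = ‖T‖ ^ qr * ‖v‖ ^ qr := by
      have h1 : ‖T‖ ^ qr * ‖v‖ ^ qr ≤ A := by
        rw [hBdef] at hBle
        have := le_trans hBle hmul
        rw [mul_sub, mul_one] at this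
        linarith
      exact le_antisymm hAleq h1
    have hTveq : ‖T v‖ = ‖T‖ * ‖v‖ := by
      have h1 : A = (‖T‖ * ‖v‖) ^ qr := by
        rw [hAeq, ← Real.mul_rpow (norm_nonneg T) (norm_nonneg v)]
      calc ‖T v‖ = (A) ^ qr⁻¹ := by
            rw [hAdef, Real.rpow_rpow_inv (norm_nonneg _) hqr0.ne']
        _ = ((‖T‖ * ‖v‖) ^ qr) ^ qr⁻¹ := by rw [h1]
        _ = ‖T‖ * ‖v‖ := Real.rpow_rpow_inv (by positivity) hqr0.ne'
    refine ⟨((‖v‖⁻¹ : ℝ) : 𝕜) • v, ?_, ?_⟩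
    · rw [norm_smul, RCLike.norm_ofReal, abs_of_pos (by positivity)]
      field_simp
    · rw [map_smul, norm_smul, RCLike.norm_ofReal, abs_of_pos (by positivity), hTveq]
      field_simp
  · -- case `q < p`
    push_neg at hple
    set ρ : ℝ := qr / pr with hρdef
    have hρ0 : 0 < ρ := by positivity
    have hρ1 : ρ < 1 := (div_lt_one hpr0).2 hple
    -- inductive construction of almost-orthogonal sums
    have claim : ∀ k : ℕ, ∀ ε : ℝ, 0 < ε → ∃ z : lp (fun _ : ℕ => 𝕜) p,
        |‖z‖ ^ pr - (k:ℝ) * τp| ≤ ε ∧ |‖T z‖ ^ qr - (k:ℝ) * B| ≤ ε := by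
      intro k
      induction k with
      | zero =>
        intro ε hε
        refine ⟨0, ?_, ?_⟩
        · simp [norm_zero, Real.zero_rpow hpr0.ne', hε.le]
        · simp [map_zero, norm_zero, Real.zero_rpow hqr0.ne', hε.le]
      | succ k ih =>
        intro ε hε
        obtain ⟨z, hz1, hz2⟩ := ih (ε/2) (by positivity)
        have happ3 := brezis_lieb_lp hp' z w hwb hwcoord
        have h3 : Tendsto (fun m => ‖z + w m‖ ^ pr) atTop (𝓝 (‖z‖ ^ pr + τp)) := by
          have := happ3.add htp
          refine this.congr fun m => ?_
          ring
        have happ4 := brezis_lieb_lp hq' (T z) (fun n => T (X n) - T v) hsb hTwcoord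
        have h4 : Tendsto (fun m => ‖T z + (T (X m) - T v)‖ ^ qr) atTop
            (𝓝 (‖T z‖ ^ qr + B)) := by
          have := happ4.add hsq
          rw [hBdef, hAdef]
          refine this.congr fun m => ?_
          ring
        obtain ⟨N₁, hN₁⟩ := (Metric.tendsto_atTop.1 h3) (ε/2) (by positivity)
        obtain ⟨N₂, hN₂⟩ := (Metric.tendsto_atTop.1 h4) (ε/2) (by positivity)
        refine ⟨z + w (max N₁ N₂), ?_, ?_⟩
        · have h5 := hN₁ (max N₁ N₂) (le_max_left _ _)
          rw [Real.dist_eq] at h5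
          have hcast : ((k+1 : ℕ):ℝ) * τp = (k:ℝ) * τp + τp := by push_cast; ring
          calc |‖z + w (max N₁ N₂)‖ ^ pr - ((k+1:ℕ):ℝ) * τp|
              = |(‖z + w (max N₁ N₂)‖ ^ pr - (‖z‖ ^ pr + τp)) + (‖z‖ ^ pr - (k:ℝ) * τp)| := by
                rw [hcast]; ring_nf
            _ ≤ |‖z + w (max N₁ N₂)‖ ^ pr - (‖z‖ ^ pr + τp)| + |‖z‖ ^ pr - (k:ℝ) * τp| :=
                abs_add_le _ _
            _ ≤ ε/2 + ε/2 := add_le_add h5.le hz1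
            _ = ε := by ring
        · have h5 := hN₂ (max N₁ N₂) (le_max_right _ _)
          rw [Real.dist_eq] at h5
          have hTz : T (z + w (max N₁ N₂)) = T z + (T (X (max N₁ N₂)) - T v) := by
            rw [map_add, hwdef, map_sub]
          rw [hTz]
          have hcast : ((k+1 : ℕ):ℝ) * B = (k:ℝ) * B + B := by push_cast; ring
          calc |‖T z + (T (X (max N₁ N₂)) - T v)‖ ^ qr - ((k+1:ℕ):ℝ) * B|
              = |(‖T z + (T (X (max N₁ N₂)) - T v)‖ ^ qr - (‖T z‖ ^ qr + B))
                  + (‖T z‖ ^ qr - (k:ℝ) * B)| := by rw [hcast]; ring_nf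
            _ ≤ |‖T z + (T (X (max N₁ N₂)) - T v)‖ ^ qr - (‖T z‖ ^ qr + B)|
                  + |‖T z‖ ^ qr - (k:ℝ) * B| := abs_add_le _ _
            _ ≤ ε/2 + ε/2 := add_le_add h5.le hz2
            _ = ε := by ring
    -- consequence: growth estimate forces B = 0
    have claim2 : ∀ k : ℕ, (k:ℝ) * B ≤ 1 + ‖T‖ ^ qr * ((k:ℝ) * τp + 1) ^ ρ := by
      intro k
      obtain ⟨z, hz1, hz2⟩ := claim k 1 one_pos
      obtain ⟨hz1a, hz1b⟩ := abs_le.1 hz1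
      obtain ⟨hz2a, hz2b⟩ := abs_le.1 hz2
      have h5 : ‖z‖ ^ pr ≤ (k:ℝ) * τp + 1 := by linarith
      have h7 : ‖T z‖ ^ qr ≤ ‖T‖ ^ qr * (‖z‖ ^ pr) ^ ρ := by
        calc ‖T z‖ ^ qr ≤ (‖T‖ * ‖z‖) ^ qr :=
              Real.rpow_le_rpow (norm_nonneg _) (T.le_opNorm z) hqr0.le
          _ = ‖T‖ ^ qr * ‖z‖ ^ qr := Real.mul_rpow (norm_nonneg _) (norm_nonneg _)
          _ = ‖T‖ ^ qr * (‖z‖ ^ pr) ^ ρ := by rw [hpow ‖z‖ (norm_nonneg _)]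
      have h8 : (‖z‖ ^ pr) ^ ρ ≤ ((k:ℝ) * τp + 1) ^ ρ :=
        Real.rpow_le_rpow (Real.rpow_nonneg (norm_nonneg _) _) h5 hρ0.le
      have h9 : ‖T‖ ^ qr * (‖z‖ ^ pr) ^ ρ ≤ ‖T‖ ^ qr * ((k:ℝ) * τp + 1) ^ ρ :=
        mul_le_mul_of_nonneg_left h8 (Real.rpow_nonneg (norm_nonneg _) _)
      linarith
    have hBzero : B = 0 := by
      refine le_antisymm ?_ hB0
      by_contra hBpos
      push_neg at hBpos
      set D : ℝ := ‖T‖ ^ qr * (τp + 1) ^ ρ with hDdef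
      have hD0 : 0 ≤ D := by
        apply mul_nonneg (Real.rpow_nonneg (norm_nonneg _) _)
        exact Real.rpow_nonneg (by linarith) _
      have hev : ∀ k : ℕ, 1 ≤ k → B ≤ 1/(k:ℝ) + D * (k:ℝ) ^ (ρ - 1) := by
        intro k hk
        have hk0 : (0:ℝ) < (k:ℝ) := by exact_mod_cast hk.trans_lt' zero_lt_one
        have hk1 : (1:ℝ) ≤ (k:ℝ) := by exact_mod_cast hk
        have h1 : ((k:ℝ) * τp + 1) ≤ (k:ℝ) * (τp + 1) := by nlinarith
        have h2 : ((k:ℝ) * τp + 1) ^ ρ ≤ ((k:ℝ) * (τp + 1)) ^ ρ :=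
          Real.rpow_le_rpow (by nlinarith) h1 hρ0.le
        have h3 : ((k:ℝ) * (τp + 1)) ^ ρ = (k:ℝ) ^ ρ * (τp + 1) ^ ρ :=
          Real.mul_rpow hk0.le (by linarith)
        have h4 : (k:ℝ) * B ≤ 1 + D * (k:ℝ) ^ ρ := by
          have := claim2 k
          rw [hDdef]
          calc (k:ℝ) * B ≤ 1 + ‖T‖ ^ qr * ((k:ℝ) * τp + 1) ^ ρ := this
            _ ≤ 1 + ‖T‖ ^ qr * ((k:ℝ) ^ ρ * (τp + 1) ^ ρ) := by
                have := le_trans h2 (le_of_eq h3)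
                have := mul_le_mul_of_nonneg_left this
                  (Real.rpow_nonneg (norm_nonneg T) qr)
                linarith
            _ = 1 + ‖T‖ ^ qr * (τp + 1) ^ ρ * (k:ℝ) ^ ρ := by ring
        have h6 : B ≤ (1 + D * (k:ℝ) ^ ρ) / (k:ℝ) := by
          rw [le_div_iff₀ hk0]
          calc B * (k:ℝ) = (k:ℝ) * B := mul_comm _ _
            _ ≤ 1 + D * (k:ℝ) ^ ρ := h4
        have h7 : (1 + D * (k:ℝ) ^ ρ) / (k:ℝ) = 1/(k:ℝ) + D * (k:ℝ) ^ (ρ - 1) := by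
          rw [add_div]
          congr 1
          rw [mul_div_assoc]
          congr 1
          rw [Real.rpow_sub hk0, Real.rpow_one]
        rw [← h7]
        exact h6
      have hlim : Tendsto (fun k : ℕ => 1/(k:ℝ) + D * (k:ℝ) ^ (ρ - 1)) atTop (𝓝 0) := by
        have h1 : Tendsto (fun k : ℕ => 1/(k:ℝ)) atTop (𝓝 0) :=
          tendsto_one_div_atTop_nhds_zero_nat
        have h2 : Tendsto (fun t : ℝ => t ^ (ρ - 1)) atTop (𝓝 0) := by
          have := tendsto_rpow_neg_atTop (y := 1 - ρ) (by linarith)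
          refine this.congr fun t => ?_
          rw [neg_sub]
        have h3 : Tendsto (fun k : ℕ => ((k:ℝ)) ^ (ρ - 1)) atTop (𝓝 0) :=
          h2.comp tendsto_natCast_atTop_atTop
        have h4 := h1.add ((h3.const_mul D))
        simpa using h4
      have hB_le : B ≤ 0 :=
        ge_of_tendsto hlim (eventually_atTop.2 ⟨1, fun k hk => hev k hk⟩)
      linarith
    -- conclude: T attains its norm at v
    have hA : A = ‖T‖ ^ qr := by rw [hBdef] at hBzero; linarith
    have hTveq : ‖T v‖ = ‖T‖ := by
      calc ‖T v‖ = (A) ^ qr⁻¹ := by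
            rw [hAdef, Real.rpow_rpow_inv (norm_nonneg _) hqr0.ne']
        _ = (‖T‖ ^ qr) ^ qr⁻¹ := by rw [hA]
        _ = ‖T‖ := Real.rpow_rpow_inv (norm_nonneg _) hqr0.ne'
    have hv1 : ‖v‖ = 1 := by
      refine le_antisymm hvle1 ?_
      have h1 : ‖T‖ ≤ ‖T‖ * ‖v‖ := by
        calc ‖T‖ = ‖T v‖ := hTveq.symm
          _ ≤ ‖T‖ * ‖v‖ := T.le_opNorm v
      nlinarith
    exact ⟨v, hv1, hTveq⟩
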